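/- For the one-dimensional MCP function |·|_α(t) = |t| − env_α|·|(t) and parameters 0 < β < α, the proximity operator prox_{β|·|_α}(x) equals x when |x| > α, and equals sgn(x)·(α/(α−β))·max{|x|−β, 0} when |x| ≤ α; in particular it is single-valued and continuous for β < α. -/

import Mathlib

/-- Moreau envelope of a real function with parameter `α`. -/
noncomputable def moreauEnvR (α : ℝ) (p : ℝ → ℝ) (x : ℝ) : ℝ :=
  ⨅ w : ℝ, p w + (1 / (2 * α)) * (w - x) ^ 2

/-- The set of minimizers defining the (possibly set-valued) proximity operator
of `g : ℝ → ℝ` with index `β` at `x`. -/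
def proxSetR (β : ℝ) (g : ℝ → ℝ) (x : ℝ) : Set ℝ :=
  {w | ∀ u : ℝ, g w + (1 / (2 * β)) * (w - x) ^ 2 ≤ g u + (1 / (2 * β)) * (u - x) ^ 2}

/-- Closed form of the MCP penalty `|t| - env_α|·|(t)`. -/
noncomputable def Gfun (α : ℝ) (t : ℝ) : ℝ := if |t| ≤ α then |t| - t ^ 2 / (2 * α) else α / 2

/-- Closed form of the prox. -/
noncomputable def Pfun (α β : ℝ) (x : ℝ) : ℝ :=
  if |x| ≤ α then Real.sign x * (α / (α - β)) * max (|x| - β) 0 else x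

lemma env_eq (α : ℝ) (hα : 0 < α) (x : ℝ) :
    moreauEnvR α (fun s => |s|) x = if |x| ≤ α then x ^ 2 / (2 * α) else |x| - α / 2 := by
  have hbdd : BddBelow (Set.range fun w : ℝ => |w| + (1 / (2 * α)) * (w - x) ^ 2) := by
    refine ⟨0, ?_⟩
    rintro y ⟨w, rfl⟩
    positivity
  unfold moreauEnvR
  apply le_antisymm
  · by_cases h : |x| ≤ α
    · rw [if_pos h]
      calc (⨅ w : ℝ, |w| + (1 / (2 * α)) * (w - x) ^ 2)
          ≤ |(0:ℝ)| + (1 / (2 * α)) * ((0:ℝ) - x) ^ 2 := ciInf_le hbdd 0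
        _ = x ^ 2 / (2 * α) := by
            simp
            ring
    · rw [if_neg h]
      push_neg at h
      rcases le_or_gt 0 x with hx | hx
      · have hx' : α < x := by rwa [abs_of_nonneg hx] at h
        calc (⨅ w : ℝ, |w| + (1 / (2 * α)) * (w - x) ^ 2)
            ≤ |x - α| + (1 / (2 * α)) * ((x - α) - x) ^ 2 := ciInf_le hbdd (x - α)
          _ = |x| - α / 2 := by
              rw [abs_of_nonneg (by linarith), abs_of_nonneg hx]
              field_simp
              ring
      · have hx' : x < -α := by
          rw [abs_of_neg hx] at h; linarith
        calc (⨅ w : ℝ, |w| + (1 / (2 * α)) * (w - x) ^ 2)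
            ≤ |x + α| + (1 / (2 * α)) * ((x + α) - x) ^ 2 := ciInf_le hbdd (x + α)
          _ = |x| - α / 2 := by
              rw [abs_of_neg (by linarith : x + α < 0), abs_of_neg hx]
              field_simp
              ring
  · apply le_ciInf
    intro w
    have h2α : (0:ℝ) < 2 * α := by linarith
    have hwx : w * x ≤ |w| * |x| := by
      rw [← abs_mul]; exact le_abs_self _
    by_cases h : |x| ≤ α
    · rw [if_pos h]
      have key : x ^ 2 ≤ 2 * α * |w| + (w - x) ^ 2 := by
        nlinarith [sq_nonneg w, abs_nonneg w, mul_le_mul_of_nonneg_left h (abs_nonneg w)]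
      calc x ^ 2 / (2 * α) ≤ (2 * α * |w| + (w - x) ^ 2) / (2 * α) :=
            (div_le_div_iff_of_pos_right h2α).mpr key
        _ = |w| + (1 / (2 * α)) * (w - x) ^ 2 := by field_simp
    · rw [if_neg h]
      push_neg at h
      have key : 2 * α * |x| - α ^ 2 ≤ 2 * α * |w| + (w - x) ^ 2 := by
        nlinarith [sq_nonneg (|x| - |w| - α), sq_abs w, sq_abs x, hwx]
      calc |x| - α / 2 = (2 * α * |x| - α ^ 2) / (2 * α) := by field_simp
        _ ≤ (2 * α * |w| + (w - x) ^ 2) / (2 * α) := (div_le_div_iff_of_pos_right h2α).mpr key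
        _ = |w| + (1 / (2 * α)) * (w - x) ^ 2 := by field_simp

lemma gfun_eq (α : ℝ) (hα : 0 < α) :
    (fun t => |t| - moreauEnvR α (fun s => |s|) t) = Gfun α := by
  funext t
  rw [env_eq α hα t]
  unfold Gfun
  split_ifs <;> ring

lemma gfun_even (α : ℝ) (t : ℝ) : Gfun α (-t) = Gfun α t := by
  unfold Gfun
  rw [abs_neg, neg_pow]
  norm_num

lemma pfun_odd (α β : ℝ) (x : ℝ) : Pfun α β (-x) = -Pfun α β x := by
  unfold Pfun
  rw [abs_neg, Real.sign_neg]
  split_ifs <;> ring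

-- lower bounds for Gfun
lemma gfun_lb1 (α : ℝ) (hα : 0 < α) (u : ℝ) : u - u ^ 2 / (2 * α) ≤ Gfun α u := by
  unfold Gfun
  split_ifs with h
  · have := le_abs_self u; linarith
  · push_neg at h
    rw [sub_le_iff_le_add, ← sub_le_iff_le_add']
    rw [le_div_iff₀ (by linarith : (0:ℝ) < 2 * α)]
    nlinarith [sq_nonneg (u - α)]

lemma gfun_lb2 (α : ℝ) (hα : 0 < α) (u : ℝ) : -u - u ^ 2 / (2 * α) ≤ Gfun α u := by
  have := gfun_lb1 α hα (-u)
  rw [gfun_even] at this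
  simpa using this

lemma master_nonneg (α β : ℝ) (hβ : 0 < β) (hβα : β < α) (x : ℝ) (hx : 0 ≤ x) (u : ℝ) :
    Gfun α (Pfun α β x) + (1 / (2 * β)) * (Pfun α β x - x) ^ 2
      + ((α - β) / (2 * α * β)) * (u - Pfun α β x) ^ 2
    ≤ Gfun α u + (1 / (2 * β)) * (u - x) ^ 2 := by
  have hα : 0 < α := hβ.trans hβα
  have hαβ : 0 < α - β := by linarith
  have habsx : |x| = x := abs_of_nonneg hx
  rcases le_or_gt x β with hxβ | hxβ
  · -- case A : 0 ≤ x ≤ β, prox is 0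
    have hP : Pfun α β x = 0 := by
      unfold Pfun
      rw [habsx, if_pos (by linarith), max_eq_right (by linarith)]
      ring
    rw [hP]
    have hG0 : Gfun α 0 = 0 := by
      unfold Gfun
      rw [abs_zero, if_pos (by linarith)]
      norm_num
    rw [hG0]
    rcases le_or_gt 0 u with hu | hu
    · have key : (u - u ^ 2 / (2 * α) + (1 / (2 * β)) * (u - x) ^ 2)
          - ((1 / (2 * β)) * (0 - x) ^ 2 + ((α - β) / (2 * α * β)) * (u - 0) ^ 2)
          = (2 * α * u * (β - x)) / (2 * α * β) := by
        field_simp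
        ring
      have hnn : (0:ℝ) ≤ (2 * α * u * (β - x)) / (2 * α * β) := by
        apply div_nonneg _ (by positivity)
        have : 0 ≤ β - x := by linarith
        positivity
      have := gfun_lb1 α hα u
      linarith
    · have key : (-u - u ^ 2 / (2 * α) + (1 / (2 * β)) * (u - x) ^ 2)
          - ((1 / (2 * β)) * (0 - x) ^ 2 + ((α - β) / (2 * α * β)) * (u - 0) ^ 2)
          = (2 * α * (-u) * (β + x)) / (2 * α * β) := by
        field_simp
        ring
      have hnn : (0:ℝ) ≤ (2 * α * (-u) * (β + x)) / (2 * α * β) := by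
        apply div_nonneg _ (by positivity)
        have h1 : 0 ≤ -u := by linarith
        have h2 : 0 ≤ β + x := by linarith
        positivity
      have := gfun_lb2 α hα u
      linarith
  · rcases le_or_gt x α with hxα | hxα
    · -- case B : β < x ≤ α
      have hxpos : 0 < x := hβ.trans hxβ
      have hP : Pfun α β x = α / (α - β) * (x - β) := by
        unfold Pfun
        rw [habsx, if_pos (by linarith), Real.sign_of_pos hxpos,
          max_eq_left (by linarith)]
        ring
      set p := α / (α - β) * (x - β) with hpdef
      rw [hP]
      have hp0 : 0 < p := by
        apply mul_pos (div_pos hα hαβ); linarith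
      have hpα : p ≤ α := by
        rw [hpdef, div_mul_eq_mul_div, div_le_iff₀ hαβ]
        nlinarith
      have hGp : Gfun α p = p - p ^ 2 / (2 * α) := by
        unfold Gfun
        rw [abs_of_pos hp0, if_pos hpα]
      rw [hGp]
      rcases le_or_gt 0 u with hu | hu
      · have hq : p - p ^ 2 / (2 * α) + (1 / (2 * β)) * (p - x) ^ 2
            + ((α - β) / (2 * α * β)) * (u - p) ^ 2
            = u - u ^ 2 / (2 * α) + (1 / (2 * β)) * (u - x) ^ 2 := by
          rw [hpdef]
          field_simp
          ring
        have := gfun_lb1 α hα u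
        linarith
      · have hq : p - p ^ 2 / (2 * α) + (1 / (2 * β)) * (p - x) ^ 2
            + ((α - β) / (2 * α * β)) * (u - p) ^ 2
            = (-u - u ^ 2 / (2 * α) + (1 / (2 * β)) * (u - x) ^ 2) + 2 * u := by
          rw [hpdef]
          field_simp
          ring
        have := gfun_lb2 α hα u
        linarith
    · -- case C : α < x, prox is x
      have hP : Pfun α β x = x := by
        unfold Pfun
        rw [habsx, if_neg (by linarith)]
      rw [hP]
      have hGx : Gfun α x = α / 2 := by
        unfold Gfun
        rw [habsx, if_neg (by linarith)]
      rw [hGx]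
      by_cases hu : |u| ≤ α
      · have hGu : Gfun α u = |u| - u ^ 2 / (2 * α) := by
          unfold Gfun; rw [if_pos hu]
        rw [hGu]
        have key : α ^ 2 - 2 * α * |u| + u ^ 2 ≤ (u - x) ^ 2 := by
          nlinarith [le_abs_self u, abs_nonneg u, sq_abs u]
        have h1 : (|u| - u ^ 2 / (2 * α) + (1 / (2 * β)) * (u - x) ^ 2)
            - (α / 2 + (1 / (2 * β)) * (x - x) ^ 2
              + ((α - β) / (2 * α * β)) * (u - x) ^ 2)
            = ((u - x) ^ 2 - (α ^ 2 - 2 * α * |u| + u ^ 2)) / (2 * α) := by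
          field_simp
          ring
        have hnn : (0:ℝ) ≤ ((u - x) ^ 2 - (α ^ 2 - 2 * α * |u| + u ^ 2)) / (2 * α) := by
          apply div_nonneg (by linarith) (by linarith)
        linarith
      · have hGu : Gfun α u = α / 2 := by
          unfold Gfun; rw [if_neg hu]
        rw [hGu]
        have hc : (α - β) / (2 * α * β) ≤ 1 / (2 * β) := by
          rw [div_le_div_iff₀ (by positivity) (by positivity)]
          nlinarith
        have h2 := mul_le_mul_of_nonneg_right hc (sq_nonneg (u - x))
        have h3 : (0:ℝ) ≤ (1 / (2 * β)) * (x - x) ^ 2 := by positivity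
        nlinarith [sq_nonneg (u - x)]

lemma master (α β : ℝ) (hβ : 0 < β) (hβα : β < α) (x u : ℝ) :
    Gfun α (Pfun α β x) + (1 / (2 * β)) * (Pfun α β x - x) ^ 2
      + ((α - β) / (2 * α * β)) * (u - Pfun α β x) ^ 2
    ≤ Gfun α u + (1 / (2 * β)) * (u - x) ^ 2 := by
  rcases le_or_gt 0 x with hx | hx
  · exact master_nonneg α β hβ hβα x hx u
  · have h := master_nonneg α β hβ hβα (-x) (by linarith) (-u)
    rw [pfun_odd, gfun_even] at h
    have e1 : (-Pfun α β x - -x) ^ 2 = (Pfun α β x - x) ^ 2 := by ring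
    have e2 : (-u - -Pfun α β x) ^ 2 = (u - Pfun α β x) ^ 2 := by ring
    have e3 : (-u - -x) ^ 2 = (u - x) ^ 2 := by ring
    rw [e1, e2, e3, gfun_even] at h
    exact h

theorem stmt_19 (α β : ℝ) (hβ : 0 < β) (hβα : β < α) :
    (∀ x : ℝ, proxSetR β (fun t => |t| - moreauEnvR α (fun s => |s|) t) x =
      {if |x| ≤ α then Real.sign x * (α / (α - β)) * max (|x| - β) 0 else x}) ∧
    Continuous (fun x : ℝ =>
      if |x| ≤ α then Real.sign x * (α / (α - β)) * max (|x| - β) 0 else x) := by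
  have hα : 0 < α := hβ.trans hβα
  have hc : 0 < (α - β) / (2 * α * β) := by
    apply div_pos (by linarith) (by positivity)
  constructor
  · intro x
    rw [gfun_eq α hα]
    show proxSetR β (Gfun α) x = {Pfun α β x}
    apply Set.eq_singleton_iff_unique_mem.mpr
    constructor
    · intro u
      have h := master α β hβ hβα x u
      have h2 : 0 ≤ ((α - β) / (2 * α * β)) * (u - Pfun α β x) ^ 2 := by positivity
      linarith
    · intro w hw
      have h1 := hw (Pfun α β x)
      have h2 := master α β hβ hβα x w
      have h3 : ((α - β) / (2 * α * β)) * (w - Pfun α β x) ^ 2 ≤ 0 := by linarith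
      have h4 : (w - Pfun α β x) ^ 2 = 0 := by
        nlinarith [sq_nonneg (w - Pfun α β x)]
      have := pow_eq_zero_iff (n := 2) (by norm_num) |>.mp h4
      linarith [this]
  · -- continuity
    have hfun : (fun x : ℝ =>
        if |x| ≤ α then Real.sign x * (α / (α - β)) * max (|x| - β) 0 else x)
        = fun x : ℝ =>
          if |x| ≤ α then (α / (α - β)) * (max (x - β) 0 - max (-x - β) 0) else x := by
      funext x
      have hinner : Real.sign x * (α / (α - β)) * max (|x| - β) 0
          = (α / (α - β)) * (max (x - β) 0 - max (-x - β) 0) := by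
        rcases lt_trichotomy x 0 with hx | hx | hx
        · rw [Real.sign_of_neg hx, abs_of_neg hx,
            max_eq_right (by linarith : x - β ≤ 0)]
          ring
        · subst hx
          simp [max_eq_right (by linarith : -(0:ℝ) - β ≤ 0),
            max_eq_right (by linarith : (0:ℝ) - β ≤ 0)]
        · rw [Real.sign_of_pos hx, abs_of_pos hx,
            max_eq_right (by linarith : -x - β ≤ 0)]
          ring
      rw [hinner]
    rw [hfun]
    apply Continuous.if_le
    · apply Continuous.mul continuous_const
      exact ((continuous_id.sub continuous_const).max continuous_const).sub
        ((continuous_id.neg.sub continuous_const).max continuous_const)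
    · exact continuous_id
    · exact continuous_abs
    · exact continuous_const
    · intro x hxα
      have hαβ' : α - β ≠ 0 := by linarith
      rcases abs_eq (le_of_lt hα) |>.mp hxα with hx | hx
      · rw [hx, max_eq_left (by linarith : (0:ℝ) ≤ α - β),
          max_eq_right (by linarith : -α - β ≤ 0)]
        field_simp
        ring
      · rw [hx, max_eq_right (by linarith : -α - β ≤ 0),
          max_eq_left (by linarith : (0:ℝ) ≤ - -α - β)]
        field_simp
        ring
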